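/- Let S and A be nonempty finite sets and let 𝒫 ⊆ Δ(S)^{S×A} be a convex and compact uncertainty set that is weakly s-tractable. Then for every next-state-independent r ∈ ℝ^{S×A×S}, every γ ∈ [0,1) and every μ ∈ Δ(S), strong duality holds: max over stationary π ∈ Δ(A)^S of min_{P∈𝒫} ∑_s μ_s v^{π,P}_s equals min_{P∈𝒫} of max over stationary π ∈ Δ(A)^S of ∑_s μ_s v^{π,P}_s. -/

import Mathlib

open scoped BigOperators

namespace RMDP

variable {S A : Type*} [Fintype S] [Fintype A]

def IsKernel (P : S → A → S → ℝ) : Prop := ∀ s a, P s a ∈ stdSimplex ℝ S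

def IsPolicy (π : S → A → ℝ) : Prop := ∀ s, π s ∈ stdSimplex ℝ A

def NextStateIndep (r : S → A → S → ℝ) : Prop :=
  ∀ (s : S) (a : A) (s' s'' : S), r s a s' = r s a s''

noncomputable def minOver {K : Type*} (K0 : Set K) (f : K → ℝ) : ℝ := sInf (f '' K0)

noncomputable def maxOver {K : Type*} (K0 : Set K) (f : K → ℝ) : ℝ := sSup (f '' K0)

noncomputable def TpiP (π : S → A → ℝ) (r : S → A → S → ℝ) (γ : ℝ)
    (P : S → A → S → ℝ) (v : S → ℝ) : S → ℝ :=
  fun s => ∑ a, π s a * ∑ s', P s a s' * (r s a s' + γ * v s')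

noncomputable def Tpi (US : Set (S → A → S → ℝ)) (π : S → A → ℝ)
    (r : S → A → S → ℝ) (γ : ℝ) (v : S → ℝ) : S → ℝ :=
  fun s => minOver US (fun P => ∑ a, π s a * ∑ s', P s a s' * (r s a s' + γ * v s'))

noncomputable def TpiHat (US : Set (S → A → S → ℝ)) (π : S → A → ℝ)
    (r : S → A → S → ℝ) (γ : ℝ) (v : S → ℝ) : S → ℝ :=
  fun s => ∑ a, π s a * minOver US (fun P => ∑ s', P s a s' * (r s a s' + γ * v s'))

noncomputable def Topt (US : Set (S → A → S → ℝ)) (r : S → A → S → ℝ) (γ : ℝ)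
    (v : S → ℝ) : S → ℝ :=
  fun s => maxOver (stdSimplex ℝ A)
    (fun p => minOver US (fun P => ∑ a, p a * ∑ s', P s a s' * (r s a s' + γ * v s')))

def IsHPolicy (π : List (S × A) → S → A → ℝ) : Prop := ∀ h s, π h s ∈ stdSimplex ℝ A

noncomputable def expRHH (π : List (S × A) → S → A → ℝ)
    (Q : List (S × A) → S → A → S → ℝ) (r : S → A → S → ℝ) :
    ℕ → List (S × A) → S → ℝ
  | 0, h, s => ∑ a, π h s a * ∑ s', Q (h ++ [(s, a)]) s a s' * r s a s'
  | (t + 1), h, s =>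
      ∑ a, π h s a * ∑ s', Q (h ++ [(s, a)]) s a s' * expRHH π Q r t (h ++ [(s, a)]) s'

noncomputable def vHH (π : List (S × A) → S → A → ℝ)
    (Q : List (S × A) → S → A → S → ℝ) (r : S → A → S → ℝ) (γ : ℝ) (s : S) : ℝ :=
  ∑' t : ℕ, γ ^ t * expRHH π Q r t [] s

def STractable (US : Set (S → A → S → ℝ)) : Prop :=
  ∀ π : S → A → ℝ, IsPolicy π →
    ∀ (r : S → A → S → ℝ) (γ : ℝ), 0 ≤ γ → γ < 1 →
      ∀ v : (S → A → S → ℝ) → S → ℝ, (∀ P ∈ US, TpiP π r γ P (v P) = v P) →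
        ∀ u : S → ℝ, Tpi US π r γ u = u →
          ∀ μ ∈ stdSimplex ℝ S,
            minOver US (fun P => ∑ s, μ s * v P s) = ∑ s, μ s * u s

def SATractable (US : Set (S → A → S → ℝ)) : Prop :=
  ∀ π : S → A → ℝ, IsPolicy π →
    ∀ (r : S → A → S → ℝ) (γ : ℝ), 0 ≤ γ → γ < 1 →
      ∀ v : (S → A → S → ℝ) → S → ℝ, (∀ P ∈ US, TpiP π r γ P (v P) = v P) →
        ∀ uhat : S → ℝ, TpiHat US π r γ uhat = uhat →
          ∀ μ ∈ stdSimplex ℝ S,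
            minOver US (fun P => ∑ s, μ s * v P s) = ∑ s, μ s * uhat s

def WeakSTractable (US : Set (S → A → S → ℝ)) : Prop :=
  ∀ π : S → A → ℝ, IsPolicy π →
    ∀ (r : S → A → S → ℝ), NextStateIndep r → ∀ γ : ℝ, 0 ≤ γ → γ < 1 →
      ∀ v : (S → A → S → ℝ) → S → ℝ, (∀ P ∈ US, TpiP π r γ P (v P) = v P) →
        ∀ u : S → ℝ, Tpi US π r γ u = u →
          ∀ μ ∈ stdSimplex ℝ S,
            minOver US (fun P => ∑ s, μ s * v P s) = ∑ s, μ s * u s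

def WeakSATractable (US : Set (S → A → S → ℝ)) : Prop :=
  ∀ π : S → A → ℝ, IsPolicy π →
    ∀ (r : S → A → S → ℝ), NextStateIndep r → ∀ γ : ℝ, 0 ≤ γ → γ < 1 →
      ∀ v : (S → A → S → ℝ) → S → ℝ, (∀ P ∈ US, TpiP π r γ P (v P) = v P) →
        ∀ uhat : S → ℝ, TpiHat US π r γ uhat = uhat →
          ∀ μ ∈ stdSimplex ℝ S,
            minOver US (fun P => ∑ s, μ s * v P s) = ∑ s, μ s * uhat s

def SSPs (US : Set (S → A → S → ℝ)) : Prop :=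
  ∀ V : S → A → S → ℝ, ∃ Pstar ∈ US, ∀ s : S, ∀ P ∈ US,
    (∑ a, ∑ s', Pstar s a s' * V s a s') ≤ ∑ a, ∑ s', P s a s' * V s a s'

def SSPsa (US : Set (S → A → S → ℝ)) : Prop :=
  ∀ V : S → A → S → ℝ, ∃ Pstar ∈ US, ∀ (s : S) (a : A), ∀ P ∈ US,
    (∑ s', Pstar s a s' * V s a s') ≤ ∑ s', P s a s' * V s a s'

def WeakSSPs (US : Set (S → A → S → ℝ)) : Prop :=
  ∀ π : S → A → ℝ, IsPolicy π → ∀ V : S → ℝ, ∃ Pstar ∈ US, ∀ s : S, ∀ P ∈ US,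
    (∑ a, π s a * ∑ s', Pstar s a s' * V s') ≤ ∑ a, π s a * ∑ s', P s a s' * V s'

def WeakSSPsa (US : Set (S → A → S → ℝ)) : Prop :=
  ∀ V : S → ℝ, ∃ Pstar ∈ US, ∀ (s : S) (a : A), ∀ P ∈ US,
    (∑ s', Pstar s a s' * V s') ≤ ∑ s', P s a s' * V s'


-- AUX1: generic min/max over, weights, bounds, MX separation, comparison, fixed points
section AuxMinMax

open Set

variable {K : Type*} {K0 : Set K} {f g : K → ℝ} {c B : ℝ} {k : K}

lemma bddBelow_image_of (h : ∀ k ∈ K0, c ≤ f k) : BddBelow (f '' K0) :=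
  ⟨c, by rintro x ⟨k, hk, rfl⟩; exact h k hk⟩

lemma bddAbove_image_of (h : ∀ k ∈ K0, f k ≤ c) : BddAbove (f '' K0) :=
  ⟨c, by rintro x ⟨k, hk, rfl⟩; exact h k hk⟩

lemma minOver_le (hb : BddBelow (f '' K0)) (hk : k ∈ K0) : RMDP.minOver K0 f ≤ f k :=
  csInf_le hb ⟨k, hk, rfl⟩

lemma le_minOver (hne : K0.Nonempty) (h : ∀ k ∈ K0, c ≤ f k) : c ≤ RMDP.minOver K0 f :=
  le_csInf (hne.image f) (by rintro x ⟨k, hk, rfl⟩; exact h k hk)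

lemma maxOver_le (hne : K0.Nonempty) (h : ∀ k ∈ K0, f k ≤ c) : RMDP.maxOver K0 f ≤ c :=
  csSup_le (hne.image f) (by rintro x ⟨k, hk, rfl⟩; exact h k hk)

lemma le_maxOver (hb : BddAbove (f '' K0)) (hk : k ∈ K0) : f k ≤ RMDP.maxOver K0 f :=
  le_csSup hb ⟨k, hk, rfl⟩

lemma minOver_le_minOver_add (hne : K0.Nonempty) (hbf : BddBelow (f '' K0))
    (h : ∀ k ∈ K0, f k ≤ g k + c) : RMDP.minOver K0 f ≤ RMDP.minOver K0 g + c := by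
  rw [← sub_le_iff_le_add]
  refine le_csInf (hne.image g) ?_
  rintro x ⟨k, hk, rfl⟩
  have h1 := minOver_le hbf hk
  have h2 := h k hk
  linarith

lemma maxOver_le_maxOver_add (hne : K0.Nonempty) (hbg : BddAbove (g '' K0))
    (h : ∀ k ∈ K0, f k ≤ g k + c) : RMDP.maxOver K0 f ≤ RMDP.maxOver K0 g + c :=
  maxOver_le hne fun k hk => (h k hk).trans (add_le_add_left (le_maxOver hbg hk) c)

lemma abs_minOver_le (hne : K0.Nonempty) (h : ∀ k ∈ K0, |f k| ≤ B) :
    |RMDP.minOver K0 f| ≤ B := by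
  obtain ⟨k0, hk0⟩ := hne
  rw [abs_le]
  constructor
  · exact le_minOver ⟨k0, hk0⟩ fun k hk => (abs_le.1 (h k hk)).1
  · exact (minOver_le (bddBelow_image_of fun k hk => (abs_le.1 (h k hk)).1) hk0).trans
      (abs_le.1 (h k0 hk0)).2

lemma exists_lt_minOver_add (hne : K0.Nonempty) {ε : ℝ} (hε : 0 < ε) :
    ∃ k ∈ K0, f k < RMDP.minOver K0 f + ε := by
  obtain ⟨x, hx, hlt⟩ := Real.lt_sInf_add_pos (hne.image f) hε
  obtain ⟨k, hk, rfl⟩ := hx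
  exact ⟨k, hk, hlt⟩

end AuxMinMax

section Weights

variable {ι : Type*} [Fintype ι]

lemma weighted_le_weighted {p x y : ι → ℝ} (hp : ∀ i, 0 ≤ p i) (h : ∀ i, x i ≤ y i) :
    ∑ i, p i * x i ≤ ∑ i, p i * y i :=
  Finset.sum_le_sum fun i _ => mul_le_mul_of_nonneg_left (h i) (hp i)

lemma weighted_le_const {p x : ι → ℝ} (hp : p ∈ stdSimplex ℝ ι) {B : ℝ} (h : ∀ i, x i ≤ B) :
    ∑ i, p i * x i ≤ B := by
  calc ∑ i, p i * x i ≤ ∑ i, p i * B := weighted_le_weighted hp.1 h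
  _ = B := by rw [← Finset.sum_mul, hp.2, one_mul]

lemma const_le_weighted {p x : ι → ℝ} (hp : p ∈ stdSimplex ℝ ι) {B : ℝ} (h : ∀ i, B ≤ x i) :
    B ≤ ∑ i, p i * x i := by
  calc B = ∑ i, p i * B := by rw [← Finset.sum_mul, hp.2, one_mul]
  _ ≤ ∑ i, p i * x i := weighted_le_weighted hp.1 h

lemma abs_weighted_le {p x : ι → ℝ} (hp : p ∈ stdSimplex ℝ ι) {B : ℝ} (h : ∀ i, |x i| ≤ B) :
    |∑ i, p i * x i| ≤ B := by
  rw [abs_le]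
  exact ⟨const_le_weighted hp fun i => (abs_le.1 (h i)).1,
    weighted_le_const hp fun i => (abs_le.1 (h i)).2⟩

lemma exists_abs_bound [Nonempty ι] (x : ι → ℝ) : ∃ C, 0 ≤ C ∧ ∀ i, |x i| ≤ C := by
  obtain ⟨i0, _, h⟩ := Finset.exists_max_image Finset.univ (fun i => |x i|)
    ⟨Classical.arbitrary ι, Finset.mem_univ _⟩
  exact ⟨|x i0|, abs_nonneg _, fun i => h i (Finset.mem_univ i)⟩

lemma unif_mem_stdSimplex [Nonempty ι] : (fun _ => (Fintype.card ι : ℝ)⁻¹) ∈ stdSimplex ℝ ι := by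
  constructor
  · intro i
    positivity
  · rw [Finset.sum_const, Finset.card_univ, nsmul_eq_mul]
    rw [mul_inv_cancel₀]
    exact_mod_cast Fintype.card_pos.ne'

end Weights

section Weights2
variable {ι : Type*} [Fintype ι]

lemma abs_sum_mul_le {p x : ι → ℝ} {Cp Cx : ℝ} (hp : ∀ i, |p i| ≤ Cp)
    (hx : ∀ i, |x i| ≤ Cx) (hCx : 0 ≤ Cx) :
    |∑ i, p i * x i| ≤ (Fintype.card ι : ℝ) * (Cp * Cx) := by
  calc |∑ i, p i * x i| ≤ ∑ i, |p i * x i| := Finset.abs_sum_le_sum_abs _ _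
  _ ≤ ∑ _i : ι, Cp * Cx := Finset.sum_le_sum fun i _ => by
      rw [abs_mul]
      exact mul_le_mul (hp i) (hx i) (abs_nonneg _) ((abs_nonneg (p i)).trans (hp i))
  _ = (Fintype.card ι : ℝ) * (Cp * Cx) := by
      rw [Finset.sum_const, Finset.card_univ, nsmul_eq_mul]

lemma le_of_forall_pos_le_add' {a b : ℝ} (h : ∀ ε : ℝ, 0 < ε → a ≤ b + ε) : a ≤ b := by
  by_contra hc
  push_neg at hc
  have := h ((a - b) / 2) (by linarith)
  linarith

end Weights2
section MX

variable {ι : Type*} [Fintype ι]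

/-- Separation-based minimax certificate: if every point of a nonempty convex compact set
`D ⊆ ℝ^ι` has a strictly positive coordinate, then there is a probability vector `w`
with `⟨w, d⟩ ≥ δ > 0` for all `d ∈ D`. -/
lemma MX {D : Set (ι → ℝ)} (hne : D.Nonempty) (hconv : Convex ℝ D) (hcpt : IsCompact D)
    (h : ∀ d ∈ D, ∃ i, 0 < d i) :
    ∃ w ∈ stdSimplex ℝ ι, ∃ δ : ℝ, 0 < δ ∧ ∀ d ∈ D, δ ≤ ∑ i, w i * d i := by
  classical
  set t : Set (ι → ℝ) := {x | ∀ i, x i ≤ 0} with ht_def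
  have ht_closed : IsClosed t := by
    have : t = ⋂ i, {x : ι → ℝ | x i ≤ 0} := by
      ext x; simp [ht_def]
    rw [this]
    exact isClosed_iInter fun i => isClosed_le (continuous_apply i) continuous_const
  have ht_conv : Convex ℝ t := by
    intro x hx y hy a b ha hb hab
    intro i
    have h1 : a * x i ≤ 0 := mul_nonpos_of_nonneg_of_nonpos ha (hx i)
    have h2 : b * y i ≤ 0 := mul_nonpos_of_nonneg_of_nonpos hb (hy i)
    have : (a • x + b • y) i = a * x i + b * y i := by
      simp [Pi.add_apply, Pi.smul_apply, smul_eq_mul]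
    rw [this]
    linarith
  have hdisj : Disjoint t D := by
    rw [Set.disjoint_left]
    intro x hx hxD
    obtain ⟨i, hi⟩ := h x hxD
    exact absurd (hx i) (not_le.2 hi)
  obtain ⟨F, u, v, hFu, huv, hFv⟩ :=
    geometric_hahn_banach_closed_compact ht_conv ht_closed hconv hcpt hdisj
  have h0t : (0 : ι → ℝ) ∈ t := fun i => le_refl 0
  have hu0 : 0 < u := by
    have := hFu 0 h0t
    rwa [map_zero] at this
  set w0 : ι → ℝ := fun i => F (fun j => if i = j then (1 : ℝ) else 0) with hw0_def
  have hrep : ∀ x : ι → ℝ, F x = ∑ i, x i * w0 i := by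
    intro x
    conv_lhs => rw [pi_eq_sum_univ x]
    rw [map_sum]
    refine Finset.sum_congr rfl fun i _ => ?_
    rw [map_smul, smul_eq_mul, hw0_def]
  have hw0nn : ∀ i, 0 ≤ w0 i := by
    intro i
    by_contra hneg
    push_neg at hneg
    set cc : ℝ := (u + 1) / (-w0 i) with hcc
    have hcpos : 0 < cc := div_pos (by linarith) (by linarith)
    have hmem : (fun j => cc * (-(if i = j then (1:ℝ) else 0))) ∈ t := by
      intro j
      have : (0:ℝ) ≤ (if i = j then (1:ℝ) else 0) := by positivity
      have := mul_nonneg hcpos.le this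
      simp only
      nlinarith
    have hval := hFu _ hmem
    have : F (fun j => cc * (-(if i = j then (1:ℝ) else 0))) = cc * (-w0 i) := by
      rw [hrep]
      rw [Finset.sum_eq_single i]
      · simp
      · intro b _ hb
        simp [Ne.symm hb]
      · intro hb; exact absurd (Finset.mem_univ i) hb
    rw [this, hcc] at hval
    rw [div_mul_cancel₀] at hval
    · linarith
    · linarith
  set T := ∑ i, w0 i with hT_def
  have hv0 : 0 < v := hu0.trans huv
  have hfd : ∀ d ∈ D, v < ∑ i, d i * w0 i := by
    intro d hd
    have := hFv d hd
    rwa [hrep] at this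
  have hT : 0 < T := by
    rcases lt_or_ge 0 T with h' | h'
    · exact h'
    have hT0 : T = 0 := le_antisymm h' (Finset.sum_nonneg fun i _ => hw0nn i)
    have hall : ∀ i ∈ Finset.univ, w0 i = 0 :=
      (Finset.sum_eq_zero_iff_of_nonneg fun i _ => hw0nn i).1 hT0
    obtain ⟨d0, hd0⟩ := hne
    have := hfd d0 hd0
    have hz : ∑ i, d0 i * w0 i = 0 := by
      apply Finset.sum_eq_zero
      intro i hi
      rw [hall i hi, mul_zero]
    rw [hz] at this
    linarith
  refine ⟨fun i => w0 i / T, ⟨fun i => div_nonneg (hw0nn i) hT.le, ?_⟩, v / T,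
    div_pos hv0 hT, ?_⟩
  · rw [← Finset.sum_div, div_self hT.ne']
  · intro d hd
    have h1 := (hfd d hd).le
    have h2 : ∑ i, w0 i / T * d i = (∑ i, d i * w0 i) / T := by
      rw [Finset.sum_div]
      exact Finset.sum_congr rfl fun i _ => by ring
    rw [h2]
    exact div_le_div_of_nonneg_right h1 hT.le

end MX
section Compare

variable {S : Type*} [Fintype S] [Nonempty S] {γ : ℝ}

/-- If `f` is monotone, `γ`-discounts constant shifts, `f u ≤ u` and `w` is a fixed point,
then `w ≤ u`. -/
lemma fixed_le_of (hγ1 : γ < 1) (f : (S → ℝ) → S → ℝ)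
    (hmono : ∀ v w : S → ℝ, (∀ s, v s ≤ w s) → ∀ s, f v s ≤ f w s)
    (hshift : ∀ (v : S → ℝ) (c : ℝ), 0 ≤ c → ∀ s, f (fun t => v t + c) s ≤ f v s + γ * c)
    {u w : S → ℝ} (hu : ∀ s, f u s ≤ u s) (hw : ∀ s, f w s = w s) : ∀ s, w s ≤ u s := by
  obtain ⟨s0, _, hs0⟩ := Finset.exists_max_image Finset.univ (fun s => w s - u s)
    ⟨Classical.arbitrary S, Finset.mem_univ _⟩
  by_cases hM : w s0 - u s0 ≤ 0
  · intro s
    have := hs0 s (Finset.mem_univ s)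
    linarith
  · push_neg at hM
    exfalso
    set M := w s0 - u s0 with hMdef
    have hM0 : (0:ℝ) ≤ M := le_of_lt hM
    have h1 : ∀ s, w s ≤ u s + M := fun s => by
      have := hs0 s (Finset.mem_univ s); linarith
    have h2 := hmono w (fun t => u t + M) h1 s0
    have h3 := hshift u M hM0 s0
    have h4 := hu s0
    have h5 := hw s0
    nlinarith

lemma le_fixed_of (hγ1 : γ < 1) (f : (S → ℝ) → S → ℝ)
    (hmono : ∀ v w : S → ℝ, (∀ s, v s ≤ w s) → ∀ s, f v s ≤ f w s)
    (hshift : ∀ (v : S → ℝ) (c : ℝ), 0 ≤ c → ∀ s, f (fun t => v t + c) s ≤ f v s + γ * c)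
    {u w : S → ℝ} (hu : ∀ s, u s ≤ f u s) (hw : ∀ s, f w s = w s) : ∀ s, u s ≤ w s := by
  obtain ⟨s0, _, hs0⟩ := Finset.exists_max_image Finset.univ (fun s => u s - w s)
    ⟨Classical.arbitrary S, Finset.mem_univ _⟩
  by_cases hM : u s0 - w s0 ≤ 0
  · intro s
    have := hs0 s (Finset.mem_univ s)
    linarith
  · push_neg at hM
    exfalso
    set M := u s0 - w s0 with hMdef
    have hM0 : (0:ℝ) ≤ M := le_of_lt hM
    have h1 : ∀ s, u s ≤ w s + M := fun s => by
      have := hs0 s (Finset.mem_univ s); linarith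
    have h2 := hmono u (fun t => w t + M) h1 s0
    have h3 := hshift w M hM0 s0
    have h4 := hu s0
    have h5 := hw s0
    nlinarith

/-- Banach fixed point for coordinatewise `γ`-contractions on `S → ℝ`. -/
lemma exists_fixed (hγ0 : 0 ≤ γ) (hγ1 : γ < 1) (f : (S → ℝ) → S → ℝ)
    (hlip : ∀ v w : S → ℝ, ∀ s, |f v s - f w s| ≤ γ * dist v w) : ∃ w, f w = w := by
  have hK : (γ.toNNReal : ℝ) = γ := Real.coe_toNNReal _ hγ0
  have hc : ContractingWith γ.toNNReal f := by
    constructor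
    · rw [← NNReal.coe_lt_coe, hK]
      exact_mod_cast hγ1
    · apply LipschitzWith.of_dist_le_mul
      intro v w
      have h0 : (0:ℝ) ≤ (γ.toNNReal : ℝ) * dist v w := by positivity
      refine (dist_pi_le_iff h0).2 fun s => ?_
      rw [Real.dist_eq, hK]
      exact hlip v w s
  exact ⟨ContractingWith.fixedPoint f hc, hc.fixedPoint_isFixedPt⟩

end Compare
section Rows

variable {S A : Type*} [Fintype S] [Fintype A] {γ : ℝ}

lemma row_shift {p : A → ℝ} (hp : p ∈ stdSimplex ℝ A) {Q : A → S → ℝ}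
    (hQ : ∀ a, Q a ∈ stdSimplex ℝ S) (c : A → S → ℝ) (v : S → ℝ) (d : ℝ) :
    ∑ a, p a * ∑ s', Q a s' * (c a s' + γ * (v s' + d)) =
      (∑ a, p a * ∑ s', Q a s' * (c a s' + γ * v s')) + γ * d := by
  have inner : ∀ a, ∑ s', Q a s' * (c a s' + γ * (v s' + d)) =
      (∑ s', Q a s' * (c a s' + γ * v s')) + γ * d := by
    intro a
    have h : ∀ s' ∈ Finset.univ, Q a s' * (c a s' + γ * (v s' + d)) =
        Q a s' * (c a s' + γ * v s') + γ * d * Q a s' := fun s' _ => by ring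
    rw [Finset.sum_congr rfl h, Finset.sum_add_distrib, ← Finset.mul_sum,
      (hQ a).2, mul_one]
  calc ∑ a, p a * ∑ s', Q a s' * (c a s' + γ * (v s' + d))
      = ∑ a, (p a * ∑ s', Q a s' * (c a s' + γ * v s') + γ * d * p a) := by
        refine Finset.sum_congr rfl fun a _ => ?_
        rw [inner a]; ring
    _ = (∑ a, p a * ∑ s', Q a s' * (c a s' + γ * v s')) + γ * d := by
        rw [Finset.sum_add_distrib, ← Finset.mul_sum, hp.2, mul_one]

lemma row_mono (hγ0 : 0 ≤ γ) {p : A → ℝ} (hp0 : ∀ a, 0 ≤ p a) {Q : A → S → ℝ}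
    (hQ0 : ∀ a s', 0 ≤ Q a s') (c : A → S → ℝ) {v w : S → ℝ} (h : ∀ s', v s' ≤ w s') :
    ∑ a, p a * ∑ s', Q a s' * (c a s' + γ * v s') ≤
      ∑ a, p a * ∑ s', Q a s' * (c a s' + γ * w s') := by
  refine Finset.sum_le_sum fun a _ => mul_le_mul_of_nonneg_left ?_ (hp0 a)
  refine Finset.sum_le_sum fun s' _ => mul_le_mul_of_nonneg_left ?_ (hQ0 a s')
  have := mul_le_mul_of_nonneg_left (h s') hγ0
  linarith

lemma row_lip (hγ0 : 0 ≤ γ) {p : A → ℝ} (hp : p ∈ stdSimplex ℝ A) {Q : A → S → ℝ}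
    (hQ : ∀ a, Q a ∈ stdSimplex ℝ S) (c : A → S → ℝ) (v w : S → ℝ) :
    |(∑ a, p a * ∑ s', Q a s' * (c a s' + γ * v s')) -
      ∑ a, p a * ∑ s', Q a s' * (c a s' + γ * w s')| ≤ γ * dist v w := by
  have hterm : ∀ a, (∑ s', Q a s' * (c a s' + γ * v s')) -
      (∑ s', Q a s' * (c a s' + γ * w s')) = ∑ s', Q a s' * (γ * (v s' - w s')) := by
    intro a
    rw [← Finset.sum_sub_distrib]
    exact Finset.sum_congr rfl fun s' _ => by ring
  have houter : (∑ a, p a * ∑ s', Q a s' * (c a s' + γ * v s')) -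
      (∑ a, p a * ∑ s', Q a s' * (c a s' + γ * w s')) =
      ∑ a, p a * ∑ s', Q a s' * (γ * (v s' - w s')) := by
    rw [← Finset.sum_sub_distrib]
    refine Finset.sum_congr rfl fun a _ => ?_
    rw [← mul_sub, hterm a]
  rw [houter]
  refine abs_weighted_le hp fun a => ?_
  refine abs_weighted_le (hQ a) fun s' => ?_
  rw [abs_mul, abs_of_nonneg hγ0]
  refine mul_le_mul_of_nonneg_left ?_ hγ0
  rw [← Real.dist_eq]
  exact dist_le_pi_dist v w s'

lemma row_bound {p : A → ℝ} (hp : p ∈ stdSimplex ℝ A) {Q : A → S → ℝ}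
    (hQ : ∀ a, Q a ∈ stdSimplex ℝ S) {x : A → S → ℝ} {B : ℝ} (h : ∀ a s', |x a s'| ≤ B) :
    |∑ a, p a * ∑ s', Q a s' * x a s'| ≤ B :=
  abs_weighted_le hp fun a => abs_weighted_le (hQ a) fun s' => h a s'

end Rows
section Ops

variable {S A : Type*} [Fintype S] [Fintype A] [Nonempty S] [Nonempty A]
variable {US : Set (S → A → S → ℝ)} {r : S → A → S → ℝ} {γ : ℝ} {π : S → A → ℝ}
variable {P : S → A → S → ℝ}

lemma cEntry_bound (hγ0 : 0 ≤ γ) {rv vv Cr Cv : ℝ} (h1 : |rv| ≤ Cr) (h2 : |vv| ≤ Cv) :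
    |rv + γ * vv| ≤ Cr + γ * Cv := by
  have h3 := abs_add_le rv (γ * vv)
  rw [abs_mul, abs_of_nonneg hγ0] at h3
  nlinarith

lemma rBound (r : S → A → S → ℝ) : ∃ C, 0 ≤ C ∧ ∀ s a s', |r s a s'| ≤ C := by
  obtain ⟨C, hC0, hC⟩ := exists_abs_bound (fun x : S × A × S => r x.1 x.2.1 x.2.2)
  exact ⟨C, hC0, fun s a s' => hC (s, a, s')⟩

lemma TpiP_fixed_exists (hγ0 : 0 ≤ γ) (hγ1 : γ < 1) (hπ : RMDP.IsPolicy π)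
    (hP : RMDP.IsKernel P) : ∃ w, RMDP.TpiP π r γ P w = w :=
  exists_fixed hγ0 hγ1 _ fun v w s => row_lip hγ0 (hπ s) (hP s) (r s) v w

lemma fixed_abs_bound (hγ0 : 0 ≤ γ) (hγ1 : γ < 1) (hπ : RMDP.IsPolicy π)
    (hP : RMDP.IsKernel P) {w : S → ℝ} (hfix : RMDP.TpiP π r γ P w = w) {Cr : ℝ}
    (hCr : ∀ s a s', |r s a s'| ≤ Cr) : ∀ s, |w s| ≤ Cr / (1 - γ) := by
  obtain ⟨s0, _, hs0⟩ := Finset.exists_max_image Finset.univ (fun s => |w s|)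
    ⟨Classical.arbitrary S, Finset.mem_univ _⟩
  have hb : |w s0| ≤ Cr + γ * |w s0| := by
    conv_lhs => rw [← congrFun hfix s0]
    refine row_bound (hπ s0) (hP s0) fun a s' => ?_
    have h2 := hs0 s' (Finset.mem_univ s')
    have h3 := cEntry_bound hγ0 (hCr s0 a s') (le_refl |w s'|)
    have h4 : γ * |w s'| ≤ γ * |w s0| := mul_le_mul_of_nonneg_left h2 hγ0
    linarith
  intro s
  have h3 := hs0 s (Finset.mem_univ s)
  have h5 : |w s0| ≤ Cr / (1 - γ) := by
    rw [le_div_iff₀ (by linarith)]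
    nlinarith
  linarith

lemma Tpi_lip (hγ0 : 0 ≤ γ) (hne : US.Nonempty) (hker : ∀ P ∈ US, RMDP.IsKernel P)
    (hπ : RMDP.IsPolicy π) (v w : S → ℝ) (s : S) :
    |RMDP.Tpi US π r γ v s - RMDP.Tpi US π r γ w s| ≤ γ * dist v w := by
  obtain ⟨Cr, hCr0, hCr⟩ := rBound r
  obtain ⟨Cv, hCv0, hCv⟩ := exists_abs_bound v
  obtain ⟨Cw, hCw0, hCw⟩ := exists_abs_bound w
  have bddv : BddBelow ((fun P => ∑ a, π s a * ∑ s', P s a s' * (r s a s' + γ * v s')) '' US) :=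
    bddBelow_image_of (c := -(Cr + γ * Cv)) fun P hP =>
      (abs_le.1 (row_bound (hπ s) (hker P hP s)
        fun a s' => cEntry_bound hγ0 (hCr s a s') (hCv s'))).1
  have bddw : BddBelow ((fun P => ∑ a, π s a * ∑ s', P s a s' * (r s a s' + γ * w s')) '' US) :=
    bddBelow_image_of (c := -(Cr + γ * Cw)) fun P hP =>
      (abs_le.1 (row_bound (hπ s) (hker P hP s)
        fun a s' => cEntry_bound hγ0 (hCr s a s') (hCw s'))).1
  rw [abs_le]
  constructor
  · have h1 : RMDP.Tpi US π r γ w s ≤ RMDP.Tpi US π r γ v s + γ * dist v w := by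
      refine minOver_le_minOver_add hne bddw fun P hP => ?_
      have := (abs_le.1 (row_lip hγ0 (hπ s) (hker P hP s) (r s) w v)).2
      rw [dist_comm w v] at this
      linarith
    linarith
  · have h1 : RMDP.Tpi US π r γ v s ≤ RMDP.Tpi US π r γ w s + γ * dist v w := by
      refine minOver_le_minOver_add hne bddv fun P hP => ?_
      have := (abs_le.1 (row_lip hγ0 (hπ s) (hker P hP s) (r s) v w)).2
      linarith
    linarith

lemma Tpi_fixed_exists (hγ0 : 0 ≤ γ) (hγ1 : γ < 1) (hne : US.Nonempty)
    (hker : ∀ P ∈ US, RMDP.IsKernel P) (hπ : RMDP.IsPolicy π) :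
    ∃ u, RMDP.Tpi US π r γ u = u :=
  exists_fixed hγ0 hγ1 _ fun v w s => Tpi_lip hγ0 hne hker hπ v w s

lemma Tpi_mono (hγ0 : 0 ≤ γ) (hne : US.Nonempty) (hker : ∀ P ∈ US, RMDP.IsKernel P)
    (hπ : RMDP.IsPolicy π) (v w : S → ℝ) (h : ∀ s, v s ≤ w s) (s : S) :
    RMDP.Tpi US π r γ v s ≤ RMDP.Tpi US π r γ w s := by
  obtain ⟨Cr, hCr0, hCr⟩ := rBound r
  obtain ⟨Cv, hCv0, hCv⟩ := exists_abs_bound v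
  have bddv : BddBelow ((fun P => ∑ a, π s a * ∑ s', P s a s' * (r s a s' + γ * v s')) '' US) :=
    bddBelow_image_of (c := -(Cr + γ * Cv)) fun P hP =>
      (abs_le.1 (row_bound (hπ s) (hker P hP s)
        fun a s' => cEntry_bound hγ0 (hCr s a s') (hCv s'))).1
  have h1 : RMDP.Tpi US π r γ v s ≤ RMDP.Tpi US π r γ w s + 0 := by
    refine minOver_le_minOver_add hne bddv fun P hP => ?_
    have := row_mono hγ0 (hπ s).1 (fun a s' => ((hker P hP) s a).1 s') (r s) h
    linarith
  linarith

lemma Tpi_shift (hγ0 : 0 ≤ γ) (hne : US.Nonempty) (hker : ∀ P ∈ US, RMDP.IsKernel P)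
    (hπ : RMDP.IsPolicy π) (v : S → ℝ) (d : ℝ) (hd : 0 ≤ d) (s : S) :
    RMDP.Tpi US π r γ (fun t => v t + d) s ≤ RMDP.Tpi US π r γ v s + γ * d := by
  obtain ⟨Cr, hCr0, hCr⟩ := rBound r
  obtain ⟨Cv, hCv0, hCv⟩ := exists_abs_bound (fun t => v t + d)
  have bddv : BddBelow
      ((fun P => ∑ a, π s a * ∑ s', P s a s' * (r s a s' + γ * (v s' + d))) '' US) :=
    bddBelow_image_of (c := -(Cr + γ * Cv)) fun P hP =>
      (abs_le.1 (row_bound (hπ s) (hker P hP s)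
        fun a s' => cEntry_bound hγ0 (hCr s a s') (hCv s'))).1
  exact minOver_le_minOver_add hne bddv fun P hP =>
    le_of_eq (row_shift (hπ s) (hker P hP s) (r s) v d)

lemma Topt_lip (hγ0 : 0 ≤ γ) (hne : US.Nonempty) (hker : ∀ P ∈ US, RMDP.IsKernel P)
    (v w : S → ℝ) (s : S) :
    |RMDP.Topt US r γ v s - RMDP.Topt US r γ w s| ≤ γ * dist v w := by
  obtain ⟨Cr, hCr0, hCr⟩ := rBound r
  obtain ⟨Cv, hCv0, hCv⟩ := exists_abs_bound v
  obtain ⟨Cw, hCw0, hCw⟩ := exists_abs_bound w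
  have hsimplexne : (stdSimplex ℝ A).Nonempty := ⟨_, unif_mem_stdSimplex⟩
  have key : ∀ (x : S → ℝ) (Cx : ℝ), (∀ t, |x t| ≤ Cx) → ∀ p ∈ stdSimplex ℝ A,
      |RMDP.minOver US (fun P => ∑ a, p a * ∑ s', P s a s' * (r s a s' + γ * x s'))| ≤
        Cr + γ * Cx := by
    intro x Cx hCx p hp
    exact abs_minOver_le hne fun P hP =>
      row_bound hp (hker P hP s) fun a s' => cEntry_bound hγ0 (hCr s a s') (hCx s')
  have bddav : BddAbove ((fun p =>
      RMDP.minOver US (fun P => ∑ a, p a * ∑ s', P s a s' * (r s a s' + γ * v s'))) ''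
        stdSimplex ℝ A) :=
    bddAbove_image_of (c := Cr + γ * Cv) fun p hp => (abs_le.1 (key v Cv hCv p hp)).2
  have bddaw : BddAbove ((fun p =>
      RMDP.minOver US (fun P => ∑ a, p a * ∑ s', P s a s' * (r s a s' + γ * w s'))) ''
        stdSimplex ℝ A) :=
    bddAbove_image_of (c := Cr + γ * Cw) fun p hp => (abs_le.1 (key w Cw hCw p hp)).2
  have step : ∀ (x y : S → ℝ), ∀ p ∈ stdSimplex ℝ A,
      RMDP.minOver US (fun P => ∑ a, p a * ∑ s', P s a s' * (r s a s' + γ * x s')) ≤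
      RMDP.minOver US (fun P => ∑ a, p a * ∑ s', P s a s' * (r s a s' + γ * y s')) +
        γ * dist x y := by
    intro x y p hp
    obtain ⟨Cx, hCx0, hCx⟩ := exists_abs_bound x
    have bddx : BddBelow ((fun P => ∑ a, p a * ∑ s', P s a s' * (r s a s' + γ * x s')) '' US) :=
      bddBelow_image_of (c := -(Cr + γ * Cx)) fun P hP =>
        (abs_le.1 (row_bound hp (hker P hP s)
          fun a s' => cEntry_bound hγ0 (hCr s a s') (hCx s'))).1
    refine minOver_le_minOver_add hne bddx fun P hP => ?_
    have := (abs_le.1 (row_lip hγ0 hp (hker P hP s) (r s) x y)).2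
    linarith
  rw [abs_le]
  constructor
  · have h1 : RMDP.Topt US r γ w s ≤ RMDP.Topt US r γ v s + γ * dist v w := by
      refine maxOver_le_maxOver_add hsimplexne bddav fun p hp => ?_
      have := step w v p hp
      rw [dist_comm w v] at this
      linarith
    linarith
  · have h1 : RMDP.Topt US r γ v s ≤ RMDP.Topt US r γ w s + γ * dist v w := by
      refine maxOver_le_maxOver_add hsimplexne bddaw fun p hp => ?_
      exact step v w p hp
    linarith

lemma Topt_fixed_exists (hγ0 : 0 ≤ γ) (hγ1 : γ < 1) (hne : US.Nonempty)
    (hker : ∀ P ∈ US, RMDP.IsKernel P) : ∃ u, RMDP.Topt US r γ u = u :=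
  exists_fixed hγ0 hγ1 _ fun v w s => Topt_lip hγ0 hne hker v w s

end Ops
section MoreRows

variable {S A : Type*} [Fintype S] [Fintype A]

lemma row_split {Q : S → ℝ} (hQ : Q ∈ stdSimplex ℝ S) {c : S → ℝ} {cc : ℝ}
    (hc : ∀ s', c s' = cc) (γ : ℝ) (v : S → ℝ) :
    ∑ s', Q s' * (c s' + γ * v s') = cc + γ * ∑ s', Q s' * v s' := by
  have h : ∀ s' ∈ Finset.univ, Q s' * (c s' + γ * v s') = Q s' * cc + γ * (Q s' * v s') :=
    fun s' _ => by rw [hc s']; ring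
  rw [Finset.sum_congr rfl h, Finset.sum_add_distrib, ← Finset.sum_mul, hQ.2, one_mul,
    ← Finset.mul_sum]

lemma weighted_add_split {p x y : A → ℝ} (γ : ℝ) :
    ∑ a, p a * (x a + γ * y a) = (∑ a, p a * x a) + γ * ∑ a, p a * y a := by
  have h : ∀ a ∈ Finset.univ, p a * (x a + γ * y a) = p a * x a + γ * (p a * y a) :=
    fun a _ => by ring
  rw [Finset.sum_congr rfl h, Finset.sum_add_distrib, ← Finset.mul_sum]

/-- Convexity of the image of a convex set under a componentwise-affine map. -/
lemma convex_image_of_affine {E ι : Type*} [AddCommGroup E] [Module ℝ E] {K0 : Set E}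
    (hconv : Convex ℝ K0) (F : E → ι → ℝ)
    (hF : ∀ P ∈ K0, ∀ Q ∈ K0, ∀ a b : ℝ, 0 ≤ a → 0 ≤ b → a + b = 1 →
      F (a • P + b • Q) = a • F P + b • F Q) : Convex ℝ (F '' K0) := by
  rintro x ⟨P, hP, rfl⟩ y ⟨Q, hQ, rfl⟩ a b ha hb hab
  exact ⟨a • P + b • Q, hconv hP hQ ha hb hab, hF P hP Q hQ a b ha hb hab⟩

end MoreRows
set_option maxHeartbeats 1000000 in
theorem stmt10 {S A : Type*} [Fintype S] [Fintype A] [Nonempty S] [Nonempty A]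
    (US : Set (S → A → S → ℝ)) (hne : US.Nonempty) (hker : ∀ P ∈ US, IsKernel P)
    (hcpt : IsCompact US) (hconv : Convex ℝ US) (hws : WeakSTractable US)
    (r : S → A → S → ℝ) (hr : NextStateIndep r) (γ : ℝ) (hγ0 : 0 ≤ γ) (hγ1 : γ < 1)
    (v : (S → A → ℝ) → (S → A → S → ℝ) → S → ℝ)
    (hv : ∀ π : S → A → ℝ, IsPolicy π → ∀ P ∈ US, TpiP π r γ P (v π P) = v π P) :
    ∀ μ ∈ stdSimplex ℝ S,
      maxOver {π : S → A → ℝ | IsPolicy π}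
          (fun π => minOver US (fun P => ∑ s, μ s * v π P s)) =
        minOver US (fun P =>
          maxOver {π : S → A → ℝ | IsPolicy π} (fun π => ∑ s, μ s * v π P s)) := by
  classical
  intro μ hμ
  obtain ⟨Cr, hCr0, hCr⟩ := rBound r
  obtain ⟨ustar, hustar⟩ := Topt_fixed_exists (US := US) (r := r) hγ0 hγ1 hne hker
  obtain ⟨Cu, hCu0, hCu⟩ := exists_abs_bound ustar
  set C1 : ℝ := Cr + γ * Cu with hC1def
  have hC10 : 0 ≤ C1 := by positivity
  -- bound on single "Q-values"
  have hQbound : ∀ s a, ∀ P ∈ US, |∑ s', P s a s' * (r s a s' + γ * ustar s')| ≤ C1 :=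
    fun s a P hP => abs_weighted_le (hker P hP s a)
      fun s' => cEntry_bound hγ0 (hCr s a s') (hCu s')
  -- bddAbove of the family appearing in Topt at ustar
  have hbddA : ∀ s : S, BddAbove ((fun p =>
      minOver US (fun P => ∑ a, p a * ∑ s', P s a s' * (r s a s' + γ * ustar s'))) ''
        stdSimplex ℝ A) := by
    intro s
    refine bddAbove_image_of (c := C1) fun p hp => ?_
    exact (abs_le.1 (abs_minOver_le hne fun P hP =>
      row_bound hp (hker P hP s) fun a s' => cEntry_bound hγ0 (hCr s a s') (hCu s'))).2
  have hTopt_eq : ∀ s, maxOver (stdSimplex ℝ A) (fun p =>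
      minOver US (fun P => ∑ a, p a * ∑ s', P s a s' * (r s a s' + γ * ustar s'))) =
      ustar s := fun s => congrFun hustar s
  -- the "next-state independent" reward value
  set sb : S := Classical.arbitrary S with hsb
  set rbar : S → A → ℝ := fun s a => r s a sb with hrbar
  have hrc : ∀ s a s', r s a s' = rbar s a := fun s a s' => hr s a s' sb
  -- Step (c): per-state minimax: a kernel whose row at s is good for all actions
  have hPs : ∀ s : S, ∃ P ∈ US, ∀ a,
      (∑ s', P s a s' * (r s a s' + γ * ustar s')) ≤ ustar s := by
    intro s
    by_contra hcon
    push_neg at hcon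
    set F : (S → A → S → ℝ) → A → ℝ :=
      fun P a => (∑ s', P s a s' * (r s a s' + γ * ustar s')) - ustar s with hF
    have hFaff : ∀ P ∈ US, ∀ Q ∈ US, ∀ α β : ℝ, 0 ≤ α → 0 ≤ β → α + β = 1 →
        F (α • P + β • Q) = α • F P + β • F Q := by
      intro P _ Q _ α β hα hβ hαβ
      funext a
      have hsum : ∑ s', (α • P + β • Q) s a s' * (r s a s' + γ * ustar s') =
          α * (∑ s', P s a s' * (r s a s' + γ * ustar s')) +
          β * (∑ s', Q s a s' * (r s a s' + γ * ustar s')) := by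
        rw [Finset.mul_sum, Finset.mul_sum, ← Finset.sum_add_distrib]
        refine Finset.sum_congr rfl fun s' _ => ?_
        have h1 : (α • P + β • Q) s a s' = α * P s a s' + β * Q s a s' := by
          simp [Pi.add_apply, Pi.smul_apply, smul_eq_mul]
        rw [h1]; ring
      show F (α • P + β • Q) a = α * F P a + β * F Q a
      simp only [hF]
      rw [hsum]
      linear_combination (ustar s) * hαβ
    have hFcont : Continuous F := by
      refine continuous_pi fun a => Continuous.sub ?_ continuous_const
      refine continuous_finset_sum _ fun s' _ => ?_
      fun_prop
    have hDne : (F '' US).Nonempty := hne.image F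
    have hDconv := convex_image_of_affine hconv F hFaff
    have hDcpt := hcpt.image hFcont
    have hpos : ∀ d ∈ F '' US, ∃ a, 0 < d a := by
      rintro d ⟨P, hP, rfl⟩
      obtain ⟨a, ha⟩ := hcon P hP
      exact ⟨a, by simp only [hF]; linarith⟩
    obtain ⟨w, hw, δ, hδ, hcert⟩ := MX hDne hDconv hDcpt hpos
    have hlow : ustar s + δ ≤ minOver US
        (fun P => ∑ a, w a * ∑ s', P s a s' * (r s a s' + γ * ustar s')) := by
      refine le_minOver hne fun P hP => ?_
      have h1 := hcert (F P) ⟨P, hP, rfl⟩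
      have h2 : ∑ a, w a * F P a =
          (∑ a, w a * ∑ s', P s a s' * (r s a s' + γ * ustar s')) - ustar s := by
        simp only [hF]
        have h3 : ∀ a ∈ Finset.univ, w a * ((∑ s', P s a s' * (r s a s' + γ * ustar s')) -
            ustar s) = w a * (∑ s', P s a s' * (r s a s' + γ * ustar s')) -
              w a * ustar s := fun a _ => by ring
        rw [Finset.sum_congr rfl h3, Finset.sum_sub_distrib, ← Finset.sum_mul, hw.2, one_mul]
      rw [h2] at h1
      linarith
    have hub : minOver US
        (fun P => ∑ a, w a * ∑ s', P s a s' * (r s a s' + γ * ustar s')) ≤ ustar s := by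
      have h4 := le_maxOver (hbddA s) hw
      exact h4.trans (le_of_eq (hTopt_eq s))
    linarith
  -- Step (d): a single kernel good at all states and actions
  have hKbar : ∃ Pbar ∈ US, ∀ s a,
      (∑ s', Pbar s a s' * (r s a s' + γ * ustar s')) ≤ ustar s := by
    by_contra hcon
    push_neg at hcon
    set F : (S → A → S → ℝ) → S × A → ℝ :=
      fun P sa => (∑ s', P sa.1 sa.2 s' * (r sa.1 sa.2 s' + γ * ustar s')) - ustar sa.1
      with hF
    have hFaff : ∀ P ∈ US, ∀ Q ∈ US, ∀ α β : ℝ, 0 ≤ α → 0 ≤ β → α + β = 1 →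
        F (α • P + β • Q) = α • F P + β • F Q := by
      intro P _ Q _ α β hα hβ hαβ
      funext sa
      have hsum : ∑ s', (α • P + β • Q) sa.1 sa.2 s' * (r sa.1 sa.2 s' + γ * ustar s') =
          α * (∑ s', P sa.1 sa.2 s' * (r sa.1 sa.2 s' + γ * ustar s')) +
          β * (∑ s', Q sa.1 sa.2 s' * (r sa.1 sa.2 s' + γ * ustar s')) := by
        rw [Finset.mul_sum, Finset.mul_sum, ← Finset.sum_add_distrib]
        refine Finset.sum_congr rfl fun s' _ => ?_
        have h1 : (α • P + β • Q) sa.1 sa.2 s' = α * P sa.1 sa.2 s' + β * Q sa.1 sa.2 s' := by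
          simp [Pi.add_apply, Pi.smul_apply, smul_eq_mul]
        rw [h1]; ring
      show F (α • P + β • Q) sa = α * F P sa + β * F Q sa
      simp only [hF]
      rw [hsum]
      linear_combination (ustar sa.1) * hαβ
    have hFcont : Continuous F := by
      refine continuous_pi fun sa => Continuous.sub ?_ continuous_const
      refine continuous_finset_sum _ fun s' _ => ?_
      fun_prop
    have hpos : ∀ d ∈ F '' US, ∃ sa, 0 < d sa := by
      rintro d ⟨P, hP, rfl⟩
      obtain ⟨s, a, ha⟩ := hcon P hP
      exact ⟨(s, a), by simp only [hF]; linarith⟩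
    obtain ⟨Λ, hΛ, δ, hδ, hcert⟩ :=
      MX (hne.image F) (convex_image_of_affine hconv F hFaff) (hcpt.image hFcont) hpos
    set lS : S → ℝ := fun s => ∑ a, Λ (s, a) with hlS
    have hlS0 : ∀ s, 0 ≤ lS s := fun s => Finset.sum_nonneg fun a _ => hΛ.1 (s, a)
    have hμ' : lS ∈ stdSimplex ℝ S := by
      refine ⟨hlS0, ?_⟩
      have h1 : ∑ sa : S × A, Λ sa = ∑ s, ∑ a, Λ (s, a) := Fintype.sum_prod_type _
      calc ∑ s, lS s = ∑ sa : S × A, Λ sa := h1.symm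
      _ = 1 := hΛ.2
    set πl : S → A → ℝ :=
      fun s a => if lS s = 0 then (Fintype.card A : ℝ)⁻¹ else Λ (s, a) / lS s with hπl_def
    have hπl : IsPolicy πl := by
      intro s
      by_cases h : lS s = 0
      · have h2 : πl s = fun _ => (Fintype.card A : ℝ)⁻¹ := by
          funext a; simp [hπl_def, h]
        rw [h2]; exact unif_mem_stdSimplex
      · constructor
        · intro a
          simp only [hπl_def, if_neg h]
          exact div_nonneg (hΛ.1 (s, a)) (hlS0 s)
        · simp only [hπl_def, if_neg h]
          rw [← Finset.sum_div]
          exact div_self h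
    have hID : ∀ x : S → A → ℝ,
        ∑ sa : S × A, Λ sa * x sa.1 sa.2 = ∑ s, lS s * ∑ a, πl s a * x s a := by
      intro x
      rw [Fintype.sum_prod_type]
      refine Finset.sum_congr rfl fun s _ => ?_
      by_cases h : lS s = 0
      · have hz : ∀ a ∈ Finset.univ, Λ (s, a) = 0 :=
          (Finset.sum_eq_zero_iff_of_nonneg fun a _ => hΛ.1 (s, a)).1 h
        rw [h, zero_mul]
        exact Finset.sum_eq_zero fun a ha => by rw [hz a ha, zero_mul]
      · rw [Finset.mul_sum]
        refine Finset.sum_congr rfl fun a _ => ?_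
        simp only [hπl_def, if_neg h]
        field_simp
    have hgbd : ∀ s, ∀ P ∈ US, |∑ a, πl s a * ∑ s', P s a s' * ustar s'| ≤ Cu :=
      fun s P hP => abs_weighted_le (hπl s)
        fun a => abs_weighted_le (hker P hP s a) fun s' => hCu s'
    have hbddg : ∀ s, BddBelow ((fun P => ∑ a, πl s a * ∑ s', P s a s' * ustar s') '' US) :=
      fun s => bddBelow_image_of (c := -Cu) fun P hP => (abs_le.1 (hgbd s P hP)).1
    set m : S → ℝ :=
      fun s => minOver US (fun P => ∑ a, πl s a * ∑ s', P s a s' * ustar s') with hm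
    have hm_le : ∀ s, ∀ P ∈ US, m s ≤ ∑ a, πl s a * ∑ s', P s a s' * ustar s' :=
      fun s P hP => minOver_le (hbddg s) hP
    set rt : S → A → S → ℝ := fun s _ _ => ustar s - γ * m s with hrt
    have hrt_nsi : NextStateIndep rt := fun s a s' s'' => rfl
    have hTrt : ∀ P ∈ US, ∀ (w : S → ℝ) (s : S), TpiP πl rt γ P w s =
        (ustar s - γ * m s) + γ * ∑ a, πl s a * ∑ s', P s a s' * w s' := by
      intro P hP w s
      have hinner : ∀ a ∈ Finset.univ, πl s a * ∑ s', P s a s' * (rt s a s' + γ * w s') =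
          πl s a * ((ustar s - γ * m s) + γ * ∑ s', P s a s' * w s') := fun a _ => by
        rw [row_split (hker P hP s a) (fun s' => rfl) γ w]
      calc TpiP πl rt γ P w s
          = ∑ a, πl s a * ((ustar s - γ * m s) + γ * ∑ s', P s a s' * w s') :=
            Finset.sum_congr rfl hinner
      _ = (∑ a, πl s a * (ustar s - γ * m s)) +
            γ * ∑ a, πl s a * ∑ s', P s a s' * w s' := weighted_add_split γ
      _ = (ustar s - γ * m s) + γ * ∑ a, πl s a * ∑ s', P s a s' * w s' := by
            rw [← Finset.sum_mul, (hπl s).2, one_mul]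
    have hfixrt : Tpi US πl rt γ ustar = ustar := by
      funext s
      have hbdd_rt : BddBelow ((fun P =>
          ∑ a, πl s a * ∑ s', P s a s' * (rt s a s' + γ * ustar s')) '' US) := by
        refine bddBelow_image_of (c := (ustar s - γ * m s) + γ * (-Cu)) fun P hP => ?_
        have h0 : (∑ a, πl s a * ∑ s', P s a s' * (rt s a s' + γ * ustar s')) =
            TpiP πl rt γ P ustar s := rfl
        rw [h0, hTrt P hP ustar s]
        have h1 : -Cu ≤ ∑ a, πl s a * ∑ s', P s a s' * ustar s' := (abs_le.1 (hgbd s P hP)).1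
        have h2 := mul_le_mul_of_nonneg_left h1 hγ0
        linarith
      apply le_antisymm
      · refine le_of_forall_pos_le_add' fun ε hε => ?_
        obtain ⟨P0, hP0, hP0lt⟩ := exists_lt_minOver_add (K0 := US)
          (f := fun P => ∑ a, πl s a * ∑ s', P s a s' * ustar s') hne hε
        have hms : minOver US (fun P => ∑ a, πl s a * ∑ s', P s a s' * ustar s') = m s := rfl
        rw [hms] at hP0lt
        have h1 : Tpi US πl rt γ ustar s ≤ TpiP πl rt γ P0 ustar s := minOver_le hbdd_rt hP0
        rw [hTrt P0 hP0 ustar s] at h1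
        have h2 : γ * (∑ a, πl s a * ∑ s', P0 s a s' * ustar s') ≤ γ * (m s + ε) :=
          mul_le_mul_of_nonneg_left hP0lt.le hγ0
        have h3 : γ * ε ≤ ε := by nlinarith
        have h4 : γ * (m s + ε) = γ * m s + γ * ε := by ring
        linarith
      · refine le_minOver hne fun P hP => ?_
        have h0 : (∑ a, πl s a * ∑ s', P s a s' * (rt s a s' + γ * ustar s')) =
            TpiP πl rt γ P ustar s := rfl
        rw [h0, hTrt P hP ustar s]
        have h1 := hm_le s P hP
        have h2 := mul_le_mul_of_nonneg_left h1 hγ0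
        linarith
    have hvt0 : ∀ P, ∃ w, P ∈ US → TpiP πl rt γ P w = w := by
      intro P
      by_cases hP : P ∈ US
      · obtain ⟨w, hw⟩ := TpiP_fixed_exists hγ0 hγ1 hπl (hker P hP)
        exact ⟨w, fun _ => hw⟩
      · exact ⟨fun _ => 0, fun h => absurd h hP⟩
    choose vt hvt using hvt0
    have htract := hws πl hπl rt hrt_nsi γ hγ0 hγ1 vt (fun P hP => hvt P hP) ustar hfixrt lS hμ'
    have hstar : ∀ s, (∑ a, πl s a * rbar s a) + γ * m s ≤ ustar s := by
      intro s
      obtain ⟨Ps, hPsUS, hPsle⟩ := hPs s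
      have h1 : ∀ a, rbar s a + γ * (∑ s', Ps s a s' * ustar s') ≤ ustar s := by
        intro a
        have h2 := hPsle a
        rwa [row_split (hker Ps hPsUS s a) (fun s' => hrc s a s') γ ustar] at h2
      have h3 := weighted_le_const (hπl s) h1
      rw [weighted_add_split γ] at h3
      have h4 := hm_le s Ps hPsUS
      have h5 := mul_le_mul_of_nonneg_left h4 hγ0
      linarith
    have hTle : ∀ P ∈ US, ∀ s,
        ∑ a, πl s a * ((∑ s', P s a s' * (r s a s' + γ * ustar s')) - ustar s) ≤
          γ * ((∑ a, πl s a * ∑ s', P s a s' * ustar s') - m s) := by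
      intro P hP s
      have hX : ∀ a ∈ Finset.univ,
          πl s a * ((∑ s', P s a s' * (r s a s' + γ * ustar s')) - ustar s) =
          πl s a * ((rbar s a + γ * ∑ s', P s a s' * ustar s') - ustar s) := fun a _ => by
        rw [row_split (hker P hP s a) (fun s' => hrc s a s') γ ustar]
      rw [Finset.sum_congr rfl hX]
      have hexp : ∑ a, πl s a * ((rbar s a + γ * ∑ s', P s a s' * ustar s') - ustar s) =
          (∑ a, πl s a * rbar s a) +
            γ * (∑ a, πl s a * ∑ s', P s a s' * ustar s') - ustar s := by
        have h5 : ∀ a ∈ Finset.univ,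
            πl s a * ((rbar s a + γ * ∑ s', P s a s' * ustar s') - ustar s) =
            (πl s a * rbar s a + γ * (πl s a * ∑ s', P s a s' * ustar s')) -
              πl s a * ustar s := fun a _ => by ring
        rw [Finset.sum_congr rfl h5, Finset.sum_sub_distrib, Finset.sum_add_distrib,
          ← Finset.mul_sum, ← Finset.sum_mul, (hπl s).2, one_mul]
      rw [hexp]
      have h6 := hstar s
      have h7 : γ * ((∑ a, πl s a * ∑ s', P s a s' * ustar s') - m s) =
          γ * (∑ a, πl s a * ∑ s', P s a s' * ustar s') - γ * m s := by ring
      linarith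
    have hkey : ∀ P ∈ US, (∑ s, lS s * ustar s) + δ ≤ ∑ s, lS s * vt P s := by
      intro P hP
      have hfixP := hvt P hP
      have hge : ∀ s, ustar s ≤ vt P s := by
        refine le_fixed_of hγ1 (TpiP πl rt γ P)
          (fun v1 v2 h s => row_mono hγ0 (hπl s).1
            (fun a s' => ((hker P hP) s a).1 s') (rt s) h)
          (fun v1 c hc s => le_of_eq (row_shift (hπl s) (hker P hP s) (rt s) v1 c))
          (fun s => ?_) (fun s => congrFun hfixP s)
        rw [hTrt P hP ustar s]
        have h1 := hm_le s P hP
        have h2 := mul_le_mul_of_nonneg_left h1 hγ0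
        linarith
      have hstep : ∀ s, γ * ((∑ a, πl s a * ∑ s', P s a s' * ustar s') - m s) ≤
          vt P s - ustar s := by
        intro s
        have h1 : TpiP πl rt γ P ustar s ≤ TpiP πl rt γ P (vt P) s :=
          row_mono hγ0 (hπl s).1 (fun a s' => ((hker P hP) s a).1 s') (rt s) hge
        rw [congrFun hfixP s, hTrt P hP ustar s] at h1
        have h2 : γ * ((∑ a, πl s a * ∑ s', P s a s' * ustar s') - m s) =
            γ * (∑ a, πl s a * ∑ s', P s a s' * ustar s') - γ * m s := by ring
        linarith
      have hc1 := hcert (F P) ⟨P, hP, rfl⟩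
      have hc2 : ∑ sa : S × A, Λ sa * F P sa =
          ∑ s, lS s * ∑ a, πl s a *
            ((∑ s', P s a s' * (r s a s' + γ * ustar s')) - ustar s) := by
        simp only [hF]
        exact hID (fun s a => (∑ s', P s a s' * (r s a s' + γ * ustar s')) - ustar s)
      rw [hc2] at hc1
      have hc3 : ∑ s, lS s * ∑ a, πl s a *
          ((∑ s', P s a s' * (r s a s' + γ * ustar s')) - ustar s) ≤
          ∑ s, lS s * (vt P s - ustar s) := by
        refine Finset.sum_le_sum fun s _ => mul_le_mul_of_nonneg_left ?_ (hlS0 s)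
        exact (hTle P hP s).trans (hstep s)
      have hc4 : ∑ s, lS s * (vt P s - ustar s) =
          (∑ s, lS s * vt P s) - ∑ s, lS s * ustar s := by
        rw [← Finset.sum_sub_distrib]
        exact Finset.sum_congr rfl fun s _ => by ring
      rw [hc4] at hc3
      linarith
    have hbad : (∑ s, lS s * ustar s) + δ ≤ ∑ s, lS s * ustar s := by
      conv_rhs => rw [← htract]
      exact le_minOver hne fun P hP => hkey P hP
    linarith
  obtain ⟨Pbar, hPbarUS, hPbar⟩ := hKbar
  -- Step (e): an optimal robust policy
  have hpistar : ∃ πs : S → A → ℝ, IsPolicy πs ∧ Tpi US πs r γ ustar = ustar := by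
    have hchoice : ∀ s : S, ∃ p ∈ stdSimplex ℝ A,
        minOver US (fun P => ∑ a, p a * ∑ s', P s a s' * (r s a s' + γ * ustar s')) =
          ustar s := by
      intro s
      have hbdd : ∀ p : A → ℝ, BddBelow
          ((fun P => ∑ a, p a * ∑ s', P s a s' * (r s a s' + γ * ustar s')) '' US) := by
        intro p
        obtain ⟨Cp, hCp0, hCp⟩ := exists_abs_bound p
        refine bddBelow_image_of (c := -((Fintype.card A : ℝ) * (Cp * C1))) fun P hP => ?_
        refine (abs_le.1 ?_).1
        exact abs_sum_mul_le hCp (fun a => hQbound s a P hP) hC10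
      have hdiff : ∀ p q : A → ℝ, ∀ P ∈ US,
          (∑ a, p a * ∑ s', P s a s' * (r s a s' + γ * ustar s')) ≤
          (∑ a, q a * ∑ s', P s a s' * (r s a s' + γ * ustar s')) +
            (Fintype.card A : ℝ) * C1 * dist p q := by
        intro p q P hP
        have hid : (∑ a, p a * ∑ s', P s a s' * (r s a s' + γ * ustar s')) -
            (∑ a, q a * ∑ s', P s a s' * (r s a s' + γ * ustar s')) =
            ∑ a, (p a - q a) * ∑ s', P s a s' * (r s a s' + γ * ustar s') := by
          rw [← Finset.sum_sub_distrib]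
          exact Finset.sum_congr rfl fun a _ => by ring
        have habs : |∑ a, (p a - q a) * ∑ s', P s a s' * (r s a s' + γ * ustar s')| ≤
            (Fintype.card A : ℝ) * (dist p q * C1) := by
          refine abs_sum_mul_le (fun a => ?_) (fun a => hQbound s a P hP) hC10
          rw [← Real.dist_eq]
          exact dist_le_pi_dist p q a
        have h5 := (abs_le.1 habs).2
        have h6 : (Fintype.card A : ℝ) * (dist p q * C1) =
            (Fintype.card A : ℝ) * C1 * dist p q := by ring
        linarith [hid ▸ h5, h6 ▸ h5]
      have hlipc : Continuous (fun p : A → ℝ =>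
          minOver US (fun P => ∑ a, p a * ∑ s', P s a s' * (r s a s' + γ * ustar s'))) := by
        have hK0 : (0:ℝ) ≤ (Fintype.card A : ℝ) * C1 := by positivity
        have hlip : LipschitzWith ((Fintype.card A : ℝ) * C1).toNNReal (fun p : A → ℝ =>
            minOver US (fun P => ∑ a, p a * ∑ s', P s a s' * (r s a s' + γ * ustar s'))) := by
          apply LipschitzWith.of_dist_le_mul
          intro p q
          rw [Real.dist_eq, Real.coe_toNNReal _ hK0, abs_le]
          constructor
          · have h7 : minOver US (fun P =>
                ∑ a, q a * ∑ s', P s a s' * (r s a s' + γ * ustar s')) ≤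
                minOver US (fun P =>
                  ∑ a, p a * ∑ s', P s a s' * (r s a s' + γ * ustar s')) +
                (Fintype.card A : ℝ) * C1 * dist p q := by
              refine minOver_le_minOver_add hne (hbdd q) fun P hP => ?_
              have := hdiff q p P hP
              rw [dist_comm q p] at this
              linarith [this]
            linarith
          · have h7 : minOver US (fun P =>
                ∑ a, p a * ∑ s', P s a s' * (r s a s' + γ * ustar s')) ≤
                minOver US (fun P =>
                  ∑ a, q a * ∑ s', P s a s' * (r s a s' + γ * ustar s')) +
                (Fintype.card A : ℝ) * C1 * dist p q :=
              minOver_le_minOver_add hne (hbdd p) fun P hP => hdiff p q P hP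
            linarith
        exact hlip.continuous
      obtain ⟨p0, hp0, hmax⟩ := (isCompact_stdSimplex ℝ A).exists_isMaxOn
        ⟨_, unif_mem_stdSimplex⟩ hlipc.continuousOn
      refine ⟨p0, hp0, le_antisymm ?_ ?_⟩
      · exact (le_maxOver (hbddA s) hp0).trans (le_of_eq (hTopt_eq s))
      · refine (le_of_eq (hTopt_eq s).symm).trans ?_
        exact maxOver_le ⟨_, unif_mem_stdSimplex⟩ fun p hp => hmax hp
    choose πs hπs1 hπs2 using hchoice
    exact ⟨πs, hπs1, funext hπs2⟩
  obtain ⟨πstar, hπstar, hfixstar⟩ := hpistar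
  -- uniform policy
  have hunifpol : IsPolicy (fun (_ : S) (_ : A) => (Fintype.card A : ℝ)⁻¹) :=
    fun s => unif_mem_stdSimplex
  -- Step (f): robust value of any policy exists and is at most ustar
  have hupi : ∀ π' : S → A → ℝ, IsPolicy π' →
      ∃ u, Tpi US π' r γ u = u ∧ ∀ s, u s ≤ ustar s := by
    intro π' hπ'
    obtain ⟨u, hu⟩ := Tpi_fixed_exists (US := US) (r := r) hγ0 hγ1 hne hker hπ'
    refine ⟨u, hu, ?_⟩
    refine fixed_le_of hγ1 (Tpi US π' r γ)
      (fun v1 v2 h s => Tpi_mono hγ0 hne hker hπ' v1 v2 h s)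
      (fun v1 c hc s => Tpi_shift hγ0 hne hker hπ' v1 c hc s)
      (fun s => ?_) (fun s => congrFun hu s)
    have h1 := le_maxOver (hbddA s) (hπ' s)
    calc Tpi US π' r γ ustar s ≤ _ := h1
    _ = ustar s := hTopt_eq s
  -- Step (h): against Pbar every policy is dominated by ustar
  have hdomPbar : ∀ π' : S → A → ℝ, IsPolicy π' → ∀ s, v π' Pbar s ≤ ustar s := by
    intro π' hπ'
    refine fixed_le_of hγ1 (TpiP π' r γ Pbar)
      (fun v1 v2 h s => row_mono hγ0 (hπ' s).1
        (fun a s' => ((hker Pbar hPbarUS) s a).1 s') (r s) h)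
      (fun v1 c hc s => le_of_eq (row_shift (hπ' s) (hker Pbar hPbarUS s) (r s) v1 c))
      (fun s => ?_) (fun s => congrFun (hv π' hπ' Pbar hPbarUS) s)
    exact weighted_le_const (hπ' s) fun a => hPbar s a
  -- Step (i): πstar dominates ustar against every kernel in US
  have hdomstar : ∀ P ∈ US, ∀ s, ustar s ≤ v πstar P s := by
    intro P hP
    refine le_fixed_of hγ1 (TpiP πstar r γ P)
      (fun v1 v2 h s => row_mono hγ0 (hπstar s).1
        (fun a s' => ((hker P hP) s a).1 s') (r s) h)
      (fun v1 c hc s => le_of_eq (row_shift (hπstar s) (hker P hP s) (r s) v1 c))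
      (fun s => ?_) (fun s => congrFun (hv πstar hπstar P hP) s)
    have hbP : BddBelow ((fun P' => ∑ a, πstar s a * ∑ s', P' s a s' *
        (r s a s' + γ * ustar s')) '' US) :=
      bddBelow_image_of (c := -C1) fun P' hP' =>
        (abs_le.1 (row_bound (hπstar s) (hker P' hP' s)
          fun a s' => cEntry_bound hγ0 (hCr s a s') (hCu s'))).1
    calc ustar s = Tpi US πstar r γ ustar s := (congrFun hfixstar s).symm
    _ ≤ _ := minOver_le hbP hP
  -- value bound for all v π P
  have hvbound : ∀ π' : S → A → ℝ, IsPolicy π' → ∀ P ∈ US, ∀ s,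
      |v π' P s| ≤ Cr / (1 - γ) := fun π' hπ' P hP s =>
    fixed_abs_bound hγ0 hγ1 hπ' (hker P hP) (hv π' hπ' P hP) hCr s
  -- weighted sums
  set L : ℝ := ∑ s, μ s * ustar s with hLdef
  have hPolNe : Set.Nonempty {π : S → A → ℝ | IsPolicy π} := ⟨_, hunifpol⟩
  have hπstarMem : πstar ∈ {π : S → A → ℝ | IsPolicy π} := hπstar
  have hLHS : maxOver {π : S → A → ℝ | IsPolicy π}
      (fun π => minOver US (fun P => ∑ s, μ s * v π P s)) = L := by
    have hval : ∀ π' : S → A → ℝ, IsPolicy π' →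
        minOver US (fun P => ∑ s, μ s * v π' P s) ≤ L := by
      intro π' hπ'
      obtain ⟨u, hu, hule⟩ := hupi π' hπ'
      have heq := hws π' hπ' r hr γ hγ0 hγ1 (v π') (fun P hP => hv π' hπ' P hP) u hu μ hμ
      rw [heq]
      exact Finset.sum_le_sum fun s _ => mul_le_mul_of_nonneg_left (hule s) (hμ.1 s)
    apply le_antisymm
    · exact maxOver_le (f := fun π => minOver US (fun P => ∑ s, μ s * v π P s)) hPolNe fun π' hπ' => hval π' hπ'
    · have heq := hws πstar hπstar r hr γ hγ0 hγ1 (v πstar)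
        (fun P hP => hv πstar hπstar P hP) ustar hfixstar μ hμ
      calc L = minOver US (fun P => ∑ s, μ s * v πstar P s) := heq.symm
      _ ≤ _ := le_maxOver (f := fun π => minOver US (fun P => ∑ s, μ s * v π P s)) (bddAbove_image_of (c := L) fun π' hπ' => hval π' hπ') hπstarMem
  have hRHS : minOver US (fun P =>
      maxOver {π : S → A → ℝ | IsPolicy π} (fun π => ∑ s, μ s * v π P s)) = L := by
    have hge : ∀ P ∈ US, L ≤
        maxOver {π : S → A → ℝ | IsPolicy π} (fun π => ∑ s, μ s * v π P s) := by
      intro P hP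
      have h3 : L ≤ ∑ s, μ s * v πstar P s :=
        Finset.sum_le_sum fun s _ => mul_le_mul_of_nonneg_left (hdomstar P hP s) (hμ.1 s)
      refine h3.trans (le_maxOver (f := fun π => ∑ s, μ s * v π P s) ?_ hπstarMem)
      exact bddAbove_image_of (c := Cr / (1 - γ)) fun π' hπ' =>
        weighted_le_const hμ fun s => (abs_le.1 (hvbound π' hπ' P hP s)).2
    apply le_antisymm
    · have h1 : maxOver {π : S → A → ℝ | IsPolicy π}
          (fun π => ∑ s, μ s * v π Pbar s) ≤ L :=
        maxOver_le (f := fun π => ∑ s, μ s * v π Pbar s) hPolNe fun π' hπ' =>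
          Finset.sum_le_sum fun s _ =>
            mul_le_mul_of_nonneg_left (hdomPbar π' hπ' s) (hμ.1 s)
      exact (minOver_le (bddBelow_image_of (c := L) hge) hPbarUS).trans h1
    · exact le_minOver hne hge
  rw [hLHS, hRHS]
end RMDP
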